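/- Let X and Y be points of F_q^{n+1} with n ≥ 2 and let i,j ∈ {1,…,n+1}. If X = Y then |C_i^X ∩ C_j^Y| = δ_{ij}·c(n−1)·q^{i−1}. If X ≠ Y then q·|C_i^X ∩ C_j^Y| = c(n−2)·q^{i−1}·(q^{j−1}−δ_{ij}) (equality of rational numbers; δ denotes the Kronecker delta). -/

import Mathlib

open Module Submodule Finset
set_option linter.unusedSectionVars false

def MaxFlagA (F : Type) [Field F] (n : ℕ) : Type :=
  {U : Fin (n + 2) → Submodule F (Fin (n + 1) → F) //
    Monotone U ∧ ∀ k : Fin (n + 2), Module.finrank F (U k) = (k : ℕ)}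

noncomputable def flagMemA {F : Type} [Field F] {n : ℕ} (c : MaxFlagA F n) (k : ℕ) :
    Submodule F (Fin (n + 1) → F) :=
  if h : k < n + 2 then c.1 ⟨k, h⟩ else ⊤

noncomputable def flagTypeA {F : Type} [Field F] {n : ℕ} (c : MaxFlagA F n)
    (X : Submodule F (Fin (n + 1) → F)) : ℕ :=
  sInf {k : ℕ | X ≤ flagMemA c k}

/-- `c(k) = ∏_{i=1}^{k} (q^(i+1)-1)/(q-1)`, the number of maximal flags of `F_q^(k+1)`. -/
noncomputable def cA (q : ℚ) (k : ℕ) : ℚ :=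
  ∏ i ∈ Finset.Icc 1 k, (q ^ (i + 1) - 1) / (q - 1)


-- sInf shift
lemma sInf_shift {S T : Set ℕ} (h : ∀ k, k + 1 ∈ S ↔ k ∈ T) (h0 : 0 ∉ S)
    (hT : T.Nonempty) : sInf S = sInf T + 1 := by
  have hmem : sInf T ∈ T := Nat.sInf_mem hT
  have hS : sInf T + 1 ∈ S := (h _).2 hmem
  refine le_antisymm (Nat.sInf_le hS) ?_
  refine le_csInf ⟨_, hS⟩ ?_
  intro k hk
  rcases k with _ | k
  · exact absurd hk h0
  · exact Nat.succ_le_succ (Nat.sInf_le ((h k).1 hk))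

lemma nat_card_sigma {ι : Type*} [Fintype ι] (α : ι → Type*) [∀ i, Finite (α i)] :
    Nat.card (Sigma α) = ∑ i, Nat.card (α i) := by
  haveI := fun i => Fintype.ofFinite (α i)
  simp [Nat.card_eq_fintype_card]

def natgeom (q m : ℕ) : ℕ := ∑ i ∈ Finset.range m, q ^ i

def phiN (q m : ℕ) : ℕ := ∏ k ∈ Finset.range m, natgeom q (k + 1)

lemma natgeom_succ (q m : ℕ) : natgeom q (m + 1) = q * natgeom q m + 1 := by
  unfold natgeom
  rw [geom_sum_succ]

lemma natgeom_one (q : ℕ) : natgeom q 1 = 1 := by simp [natgeom]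

lemma phiN_zero (q : ℕ) : phiN q 0 = 1 := by simp [phiN]

lemma phiN_succ (q m : ℕ) : phiN q (m + 1) = phiN q m * natgeom q (m + 1) := by
  simp [phiN, Finset.prod_range_succ]

lemma natgeom_mul (q m : ℕ) (hq : 1 ≤ q) : natgeom q m * (q - 1) + 1 = q ^ m := by
  induction m with
  | zero => simp [natgeom]
  | succ m ih =>
    rw [natgeom_succ, pow_succ]
    zify [hq] at ih ⊢
    linear_combination q * ih

-- Finiteness


def GFlag (F : Type) [Field F] (V : Type) [AddCommGroup V] [Module F V] (m : ℕ) : Type :=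
  {U : Fin (m + 1) → Submodule F V //
    Monotone U ∧ ∀ k : Fin (m + 1), Module.finrank F (U k) = (k : ℕ)}

noncomputable def gMem {F : Type} [Field F] {V : Type} [AddCommGroup V] [Module F V] {m : ℕ}
    (c : GFlag F V m) (k : ℕ) : Submodule F V :=
  if h : k < m + 1 then c.1 ⟨k, h⟩ else ⊤

noncomputable def gtype {F : Type} [Field F] {V : Type} [AddCommGroup V] [Module F V] {m : ℕ}
    (c : GFlag F V m) (X : Submodule F V) : ℕ :=
  sInf {k : ℕ | X ≤ gMem c k}


variable {F V : Type} [Field F] [Fintype F] [AddCommGroup V] [Module F V]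

lemma finite_of_findim [FiniteDimensional F V] : Finite V := Module.finite_of_finite F

lemma finite_submodule [FiniteDimensional F V] : Finite (Submodule F V) := by
  haveI : Finite V := Module.finite_of_finite F
  exact Finite.of_injective (fun W => (W : Set V)) SetLike.coe_injective

lemma finite_gflag [FiniteDimensional F V] (m : ℕ) : Finite (GFlag F V m) := by
  haveI := finite_submodule (F := F) (V := V)
  exact Subtype.finite

section RankLemmas
variable {F V : Type} [Field F] [AddCommGroup V] [Module F V] [FiniteDimensional F V]

lemma finrank_map_mkQ (Z W : Submodule F V) (hZW : Z ≤ W) :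
    finrank F (W.map Z.mkQ) + finrank F Z = finrank F W := by
  have h := LinearMap.finrank_range_add_finrank_ker (Z.mkQ.comp W.subtype)
  rw [LinearMap.range_comp, Submodule.range_subtype, LinearMap.ker_comp, Submodule.ker_mkQ] at h
  rw [← h]
  congr 1
  exact (Submodule.comapSubtypeEquivOfLe hZW).finrank_eq.symm

set_option linter.unusedSectionVars false in
lemma le_comap_mkQ' (Z : Submodule F V) (W' : Submodule F (V ⧸ Z)) : Z ≤ W'.comap Z.mkQ := by
  intro x hx
  have : Z.mkQ x = 0 := (Submodule.Quotient.mk_eq_zero Z).2 hx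
  simp [Submodule.mem_comap, this]

set_option linter.unusedSectionVars false in
lemma map_comap_mkQ (Z : Submodule F V) (W' : Submodule F (V ⧸ Z)) :
    (W'.comap Z.mkQ).map Z.mkQ = W' := by
  rw [Submodule.map_comap_eq, Submodule.range_mkQ, top_inf_eq]

lemma finrank_comap_mkQ (Z : Submodule F V) (W' : Submodule F (V ⧸ Z)) :
    finrank F (W'.comap Z.mkQ) = finrank F W' + finrank F Z := by
  have h := finrank_map_mkQ Z (W'.comap Z.mkQ) (le_comap_mkQ' Z W')
  rw [map_comap_mkQ] at h
  omega

lemma finrank_map_mkQ_of_disjoint (Z X : Submodule F V) (hXZ : X ⊓ Z = ⊥) :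
    finrank F (X.map Z.mkQ) = finrank F X := by
  have h := LinearMap.finrank_range_add_finrank_ker (Z.mkQ.comp X.subtype)
  rw [LinearMap.range_comp, Submodule.range_subtype, LinearMap.ker_comp, Submodule.ker_mkQ] at h
  have hker : Submodule.comap X.subtype Z = ⊥ := by
    ext x
    simp only [Submodule.mem_comap, Submodule.mem_bot]
    constructor
    · intro hx
      have : (x : V) ∈ X ⊓ Z := ⟨x.2, hx⟩
      rw [hXZ] at this
      exact Subtype.ext this
    · rintro rfl; simp
  rw [hker] at h
  simpa using h

lemma rank_zero_eq_bot (W : Submodule F V) (h : finrank F W = 0) : W = ⊥ :=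
  Submodule.finrank_eq_zero.mp h

set_option linter.unusedSectionVars false in
lemma rank_one_ne_bot (W : Submodule F V) (h : finrank F W = 1) : W ≠ ⊥ := by
  intro hb
  rw [hb] at h
  simp [finrank_bot] at h

lemma points_disjoint (X Z : Submodule F V) (hX : finrank F X = 1) (hZ : finrank F Z = 1)
    (hne : X ≠ Z) : X ⊓ Z = ⊥ := by
  by_contra hb
  have h1 : 1 ≤ finrank F (X ⊓ Z : Submodule F V) := by
    rcases Nat.eq_zero_or_pos (finrank F (X ⊓ Z : Submodule F V)) with h | h
    · exact absurd (Submodule.finrank_eq_zero.mp h) hb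
    · exact h
  have hXZ : X ⊓ Z = X := Submodule.eq_of_le_of_finrank_le inf_le_left (by omega)
  have hXZ' : X ⊓ Z = Z := Submodule.eq_of_le_of_finrank_le inf_le_right (by omega)
  exact hne (hXZ.symm.trans hXZ')

lemma point_eq_of_le (X W : Submodule F V) (hX : finrank F X = 1) (hW : finrank F W = 1)
    (h : X ≤ W) : X = W :=
  Submodule.eq_of_le_of_finrank_le h (by omega)

end RankLemmas

section GMem
variable {F V : Type} [Field F] [AddCommGroup V] [Module F V] [FiniteDimensional F V] {m : ℕ}

lemma gMem_lt (c : GFlag F V m) (k : ℕ) (h : k < m + 1) : gMem c k = c.1 ⟨k, h⟩ := dif_pos h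

lemma gMem_ge (c : GFlag F V m) (k : ℕ) (h : ¬ k < m + 1) : gMem c k = ⊤ := dif_neg h

lemma finrank_gMem (c : GFlag F V m) (k : ℕ) (h : k < m + 1) :
    finrank F (gMem c k) = k := by
  rw [gMem_lt c k h]
  exact c.2.2 ⟨k, h⟩

lemma gMem_mono (c : GFlag F V m) : Monotone (gMem c) := by
  intro a b hab
  by_cases ha : a < m + 1
  · by_cases hb : b < m + 1
    · rw [gMem_lt c a ha, gMem_lt c b hb]
      exact c.2.1 (show (⟨a, ha⟩ : Fin (m+1)) ≤ ⟨b, hb⟩ from hab)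
    · rw [gMem_ge c b hb]; exact le_top
  · have : ¬ b < m + 1 := by omega
    rw [gMem_ge c a ha, gMem_ge c b this]

lemma gMem_zero (c : GFlag F V m) : gMem c 0 = ⊥ :=
  rank_zero_eq_bot _ (finrank_gMem c 0 (by omega))

lemma gMem_top (c : GFlag F V m) (hm : finrank F V = m) : gMem c m = ⊤ := by
  by_cases h : m < m + 1
  · exact Submodule.eq_top_of_finrank_eq ((finrank_gMem c m h).trans hm.symm)
  · omega

lemma gtype_mem_upclosed (c : GFlag F V m) (X : Submodule F V) :
    ∀ k₁ k₂ : ℕ, k₁ ≤ k₂ → k₁ ∈ {k : ℕ | X ≤ gMem c k} → k₂ ∈ {k : ℕ | X ≤ gMem c k} :=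
  fun _ _ h h1 => le_trans h1 (gMem_mono c h)

lemma gtype_eq_succ_iff (c : GFlag F V m) (X : Submodule F V) (k : ℕ) :
    gtype c X = k + 1 ↔ X ≤ gMem c (k + 1) ∧ ¬ X ≤ gMem c k :=
  Nat.sInf_upward_closed_eq_succ_iff (gtype_mem_upclosed c X) k

lemma gtype_ne_zero (c : GFlag F V m) (X : Submodule F V) (hX : X ≠ ⊥) :
    gtype c X ≠ 0 := by
  intro h
  have h2 : (0 : ℕ) ∈ {k : ℕ | X ≤ gMem c k} := by
    have hne : {k : ℕ | X ≤ gMem c k}.Nonempty := ⟨m + 1, by simp [Set.mem_setOf_eq, gMem_ge c (m+1) (by omega)]⟩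
    rw [← h]; exact Nat.sInf_mem hne
  rw [Set.mem_setOf_eq, gMem_zero c, le_bot_iff] at h2
  exact hX h2

lemma gtype_le (c : GFlag F V m) (X : Submodule F V) (hm : finrank F V = m) :
    gtype c X ≤ m :=
  Nat.sInf_le (by simp [Set.mem_setOf_eq, gMem_top c hm])

lemma gtype_eq_one (c : GFlag F V m) (X : Submodule F V) (hX : X ≠ ⊥) (hm : 0 < m)
    (hle : X ≤ c.1 ⟨1, by omega⟩) : gtype c X = 1 := by
  rw [show (1 : ℕ) = 0 + 1 from rfl, gtype_eq_succ_iff]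
  constructor
  · rw [gMem_lt c 1 (by omega)]; exact hle
  · rw [gMem_zero c, le_bot_iff]; exact hX

section QuotEquiv
variable {F V : Type} [Field F] [AddCommGroup V] [Module F V] [FiniteDimensional F V]
variable (Z : Submodule F V) (hZ : finrank F Z = 1) (m : ℕ)

noncomputable def qfInv (d : GFlag F (V ⧸ Z) m) (k : Fin (m + 2)) : Submodule F V :=
  if h : (k : ℕ) = 0 then ⊥ else
    (d.1 ⟨(k : ℕ) - 1, by have := k.isLt; omega⟩).comap Z.mkQ

lemma qfInv_zero (d : GFlag F (V ⧸ Z) m) (k : Fin (m + 2)) (h : (k : ℕ) = 0) :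
    qfInv Z m d k = ⊥ := dif_pos h

lemma qfInv_pos (d : GFlag F (V ⧸ Z) m) (k : Fin (m + 2)) (h : ¬ (k : ℕ) = 0) :
    qfInv Z m d k = (d.1 ⟨(k : ℕ) - 1, by have := k.isLt; omega⟩).comap Z.mkQ := dif_neg h

noncomputable def quotFlagEquiv :
    {c : GFlag F V (m + 1) // c.1 ⟨1, by omega⟩ = Z} ≃ GFlag F (V ⧸ Z) m where
  toFun c := ⟨fun k => (c.1.1 ⟨(k : ℕ) + 1, by have := k.isLt; omega⟩).map Z.mkQ, by
      intro a b hab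
      exact Submodule.map_mono (c.1.2.1 (Fin.mk_le_mk.mpr (by
        have : (a : ℕ) ≤ (b : ℕ) := hab
        omega))), by
      intro k
      have hle : Z ≤ c.1.1 ⟨(k : ℕ) + 1, by have := k.isLt; omega⟩ :=
        le_trans (le_of_eq c.2.symm) (c.1.2.1 (Fin.mk_le_mk.mpr (by omega)))
      have h := finrank_map_mkQ Z _ hle
      have h2 := c.1.2.2 ⟨(k : ℕ) + 1, by have := k.isLt; omega⟩
      simp only at h2
      show finrank F ((c.1.1 ⟨(k : ℕ) + 1, by have := k.isLt; omega⟩).map Z.mkQ) = (k : ℕ)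
      omega⟩
  invFun d := ⟨⟨qfInv Z m d, by
      intro a b hab
      have hab' : (a : ℕ) ≤ (b : ℕ) := hab
      by_cases ha : (a : ℕ) = 0
      · rw [qfInv_zero Z m d a ha]
        exact bot_le
      · have hb : ¬ (b : ℕ) = 0 := by omega
        rw [qfInv_pos Z m d a ha, qfInv_pos Z m d b hb]
        exact Submodule.comap_mono (d.2.1 (Fin.mk_le_mk.mpr (by omega))), by
      intro k
      show finrank F (qfInv Z m d k) = (k : ℕ)
      by_cases hk : (k : ℕ) = 0
      · rw [qfInv_zero Z m d k hk, hk]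
        exact finrank_bot F V
      · rw [qfInv_pos Z m d k hk, finrank_comap_mkQ,
          d.2.2 ⟨(k : ℕ) - 1, by have := k.isLt; omega⟩, hZ]
        simp only
        omega⟩, by
      show qfInv Z m d ⟨1, by omega⟩ = Z
      rw [qfInv_pos Z m d ⟨1, by omega⟩ (by simp)]
      have h0 : d.1 ⟨0, by omega⟩ = ⊥ := rank_zero_eq_bot _ (d.2.2 ⟨0, by omega⟩)
      have : (⟨((⟨1, by omega⟩ : Fin (m + 2)) : ℕ) - 1, by omega⟩ : Fin (m + 1)) = ⟨0, by omega⟩ := rfl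
      rw [this, h0, Submodule.comap_bot, Submodule.ker_mkQ]⟩
  left_inv c := by
    apply Subtype.ext
    apply Subtype.ext
    funext k
    rcases k with ⟨k, hk⟩
    dsimp only
    by_cases h : k = 0
    · subst h
      refine (qfInv_zero Z m _ _ rfl).trans ?_
      exact (rank_zero_eq_bot _ (c.1.2.2 ⟨0, hk⟩)).symm
    · refine (qfInv_pos Z m _ ⟨k, hk⟩ h).trans ?_
      show Submodule.comap Z.mkQ ((c.1.1 ⟨k - 1 + 1, by omega⟩).map Z.mkQ) = c.1.1 ⟨k, hk⟩
      have hidx : (⟨k - 1 + 1, by omega⟩ : Fin (m + 2)) = ⟨k, hk⟩ := by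
        simp [Nat.sub_add_cancel (by omega : 1 ≤ k)]
      rw [hidx, Submodule.comap_map_eq, Submodule.ker_mkQ]
      apply sup_eq_left.mpr
      exact le_trans (le_of_eq c.2.symm) (c.1.2.1 (Fin.mk_le_mk.mpr (by omega)))
  right_inv d := by
    apply Subtype.ext
    funext k
    dsimp only
    show (qfInv Z m d ⟨(k : ℕ) + 1, by have := k.isLt; omega⟩).map Z.mkQ = d.1 k
    rw [qfInv_pos Z m d _ (by simp)]
    have hidx : (⟨((⟨(k : ℕ) + 1, by have := k.isLt; omega⟩ : Fin (m + 2)) : ℕ) - 1,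
        by have := k.isLt; omega⟩ : Fin (m + 1)) = k := by
      apply Fin.ext
      simp
    rw [hidx, map_comap_mkQ]

lemma quotFlagEquiv_mem (c : {c : GFlag F V (m + 1) // c.1 ⟨1, by omega⟩ = Z})
    (X : Submodule F V) (k : ℕ) :
    X ≤ gMem c.1 (k + 1) ↔ X.map Z.mkQ ≤ gMem (quotFlagEquiv Z hZ m c) k := by
  by_cases hk : k < m + 1
  · rw [gMem_lt (m := m + 1) c.1 (k + 1) (by omega), gMem_lt (m := m) _ k hk]
    have heq : (quotFlagEquiv Z hZ m c).1 ⟨k, hk⟩ =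
        (c.1.1 ⟨k + 1, by omega⟩).map Z.mkQ := rfl
    rw [heq]
    constructor
    · exact fun h => Submodule.map_mono h
    · intro h x hx
      obtain ⟨w, hw, hww⟩ := h (Submodule.mem_map_of_mem hx)
      have hxw : w - x ∈ Z := by
        rw [← Submodule.ker_mkQ Z]
        simp only [LinearMap.mem_ker, map_sub]
        rw [hww]
        simp
      have hZle : Z ≤ c.1.1 ⟨k + 1, by omega⟩ :=
        le_trans (le_of_eq c.2.symm) (c.1.2.1 (Fin.mk_le_mk.mpr (by omega)))
      have : x = w - (w - x) := by abel
      rw [this]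
      exact Submodule.sub_mem _ hw (hZle hxw)
  · rw [gMem_ge (m := m + 1) c.1 (k + 1) (by omega), gMem_ge (m := m) _ k hk]
    exact iff_of_true le_top le_top

lemma gtype_quotFlagEquiv (c : {c : GFlag F V (m + 1) // c.1 ⟨1, by omega⟩ = Z})
    (X : Submodule F V) (hX : X ≠ ⊥) :
    gtype c.1 X = gtype (quotFlagEquiv Z hZ m c) (X.map Z.mkQ) + 1 := by
  apply sInf_shift
  · exact fun k => quotFlagEquiv_mem Z hZ m c X k
  · intro h0
    rw [Set.mem_setOf_eq, gMem_zero, le_bot_iff] at h0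
    exact hX h0
  · refine ⟨m + 1, ?_⟩
    show X.map Z.mkQ ≤ gMem ((quotFlagEquiv Z hZ m) c) (m + 1)
    rw [gMem_ge (m := m) _ (m + 1) (by omega)]
    exact le_top

end QuotEquiv
section Points
variable {F : Type} [Field F] [Fintype F] {V : Type} [AddCommGroup V] [Module F V]
  [FiniteDimensional F V]

lemma card_ne_zero_aux (q : ℕ) (hq : Fintype.card F = q) :
    Nat.card {x : V // x ≠ 0} + 1 = q ^ (finrank F V) := by
  classical
  haveI : Finite V := Module.finite_of_finite F
  haveI : Fintype V := Fintype.ofFinite V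
  have h1 : Fintype.card V = q ^ (finrank F V) := by
    rw [← hq]
    exact card_eq_pow_finrank
  have h2 : Nat.card {x : V // x ≠ 0} = Fintype.card V - 1 := by
    rw [Nat.card_eq_fintype_card]
    classical
    have := Fintype.card_subtype_compl (fun x : V => x = 0)
    simp only [Fintype.card_subtype_eq] at this
    convert this using 2
  have h3 : 1 ≤ Fintype.card V := Fintype.card_pos
  omega

lemma card_points (q : ℕ) (hq : Fintype.card F = q) (m : ℕ) (hm : finrank F V = m) :
    Nat.card {Z : Submodule F V // finrank F Z = 1} = natgeom q m := by
  haveI : Finite V := Module.finite_of_finite F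
  haveI : Finite (Submodule F V) := finite_submodule
  haveI : Fintype {Z : Submodule F V // finrank F Z = 1} := Fintype.ofFinite _
  set f : {v : V // v ≠ 0} → {Z : Submodule F V // finrank F Z = 1} :=
    fun v => ⟨Submodule.span F {v.1}, finrank_span_singleton v.2⟩ with hf
  have hfib : ∀ Z, Nat.card {v : {v : V // v ≠ 0} // f v = Z} + 1 = q := by
    intro Z
    have e : {v : {v : V // v ≠ 0} // f v = Z} ≃ {x : Z.1 // x ≠ 0} := by
      refine ⟨fun v => ⟨⟨v.1.1, ?_⟩, ?_⟩, fun x => ⟨⟨x.1.1, ?_⟩, ?_⟩, ?_, ?_⟩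
      · have : Submodule.span F {v.1.1} = Z.1 := congrArg Subtype.val v.2
        rw [← this]
        exact Submodule.mem_span_singleton_self _
      · intro h
        exact v.1.2 (by simpa using congrArg Subtype.val h)
      · intro h
        exact x.2 (Subtype.ext h)
      · apply Subtype.ext
        show Submodule.span F {(x.1.1 : V)} = Z.1
        refine point_eq_of_le _ _ (finrank_span_singleton ?_) Z.2 ?_
        · intro h
          exact x.2 (Subtype.ext h)
        · rw [Submodule.span_le, Set.singleton_subset_iff]
          exact x.1.2
      · intro v
        apply Subtype.ext
        apply Subtype.ext
        rfl
      · intro x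
        apply Subtype.ext
        apply Subtype.ext
        rfl
    rw [Nat.card_congr e]
    have := card_ne_zero_aux (V := Z.1) q hq
    rwa [Z.2, pow_one] at this
  have hq2 : 2 ≤ q := by rw [← hq]; exact Fintype.one_lt_card
  have hsum : Nat.card {v : V // v ≠ 0} =
      ∑ Z : {Z : Submodule F V // finrank F Z = 1},
        Nat.card {v : {v : V // v ≠ 0} // f v = Z} := by
    haveI : Finite V := Module.finite_of_finite F
    rw [← nat_card_sigma]
    exact Nat.card_congr (Equiv.sigmaFiberEquiv f).symm
  have hval : ∀ Z : {Z : Submodule F V // finrank F Z = 1},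
      Nat.card {v : {v : V // v ≠ 0} // f v = Z} = q - 1 := fun Z => by
    have := hfib Z; omega
  rw [Finset.sum_congr rfl (fun Z _ => hval Z), Finset.sum_const, smul_eq_mul] at hsum
  have hcard := card_ne_zero_aux (V := V) q hq
  rw [hm] at hcard
  have hgeo := natgeom_mul q m (by omega)
  have hcc : (Finset.univ : Finset {Z : Submodule F V // finrank F Z = 1}).card = Nat.card {Z : Submodule F V // finrank F Z = 1} := by
    rw [Finset.card_univ]
    exact Nat.card_eq_fintype_card.symm
  rw [hcc] at hsum
  have : Nat.card {Z : Submodule F V // finrank F Z = 1} * (q - 1) = natgeom q m * (q - 1) := by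
    omega
  exact Nat.eq_of_mul_eq_mul_right (by omega) this

lemma card_points_le (q : ℕ) (hq : Fintype.card F = q) (P : Submodule F V) (d : ℕ)
    (hP : finrank F P = d) :
    Nat.card {Z : Submodule F V // finrank F Z = 1 ∧ Z ≤ P} = natgeom q d := by
  have e : {Z : Submodule F V // finrank F Z = 1 ∧ Z ≤ P} ≃
      {Z : Submodule F P // finrank F Z = 1} := by
    refine ⟨fun Z => ⟨Z.1.comap P.subtype,
        (Submodule.comapSubtypeEquivOfLe Z.2.2).finrank_eq.trans Z.2.1⟩,
      fun W => ⟨W.1.map P.subtype, ?_, Submodule.map_subtype_le _ _⟩, ?_, ?_⟩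
    · rw [← (Submodule.equivMapOfInjective P.subtype (Submodule.injective_subtype P) W.1).finrank_eq]
      exact W.2
    · intro Z
      apply Subtype.ext
      show Submodule.map P.subtype (Submodule.comap P.subtype Z.1) = Z.1
      rw [Submodule.map_comap_subtype]
      exact inf_eq_right.mpr Z.2.2
    · intro W
      apply Subtype.ext
      show Submodule.comap P.subtype (Submodule.map P.subtype W.1) = W.1
      rw [Submodule.comap_map_eq, Submodule.ker_subtype, sup_bot_eq]
  rw [Nat.card_congr e]
  exact card_points q hq d hP

end Points
section Decomp
variable {F : Type} [Field F] [Fintype F] {V : Type} [AddCommGroup V] [Module F V]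
  [FiniteDimensional F V]

noncomputable def flagSigmaEquiv (m : ℕ) (Pred : GFlag F V (m + 1) → Prop) :
    {c : GFlag F V (m + 1) // Pred c} ≃
      Σ Z : {Z : Submodule F V // finrank F Z = 1},
        {c : GFlag F V (m + 1) // c.1 ⟨1, by omega⟩ = Z.1 ∧ Pred c} :=
  (Equiv.sigmaFiberEquiv (fun x : {c : GFlag F V (m + 1) // Pred c} =>
    (⟨x.1.1 ⟨1, by omega⟩, x.1.2.2 ⟨1, by omega⟩⟩ : {Z : Submodule F V // finrank F Z = 1}))).symm.trans
  (Equiv.sigmaCongrRight (fun Z =>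
    { toFun := fun x => ⟨x.1.1, congrArg Subtype.val x.2, x.1.2⟩
      invFun := fun c => ⟨⟨c.1, c.2.2⟩, Subtype.ext c.2.1⟩
      left_inv := fun x => Subtype.ext (Subtype.ext rfl)
      right_inv := fun c => Subtype.ext rfl }))

noncomputable def fiberCondEquiv (Z : Submodule F V) (hZ : finrank F Z = 1) (m : ℕ)
    (Pred : GFlag F V (m + 1) → Prop) (Pred' : GFlag F (V ⧸ Z) m → Prop)
    (h : ∀ c : {c : GFlag F V (m + 1) // c.1 ⟨1, by omega⟩ = Z},
      Pred c.1 ↔ Pred' (quotFlagEquiv Z hZ m c)) :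
    {c : GFlag F V (m + 1) // c.1 ⟨1, by omega⟩ = Z ∧ Pred c} ≃
      {d : GFlag F (V ⧸ Z) m // Pred' d} :=
  ((Equiv.subtypeSubtypeEquivSubtypeInter _ _).symm).trans
    ((quotFlagEquiv Z hZ m).subtypeEquiv h)

lemma finrank_quot (Z : Submodule F V) (hZ : finrank F Z = 1) (m : ℕ)
    (hm : finrank F V = m + 1) : finrank F (V ⧸ Z) = m := by
  have := Submodule.finrank_quotient_add_finrank Z
  omega

lemma flag_card_total (q : ℕ) (hq : Fintype.card F = q) :
    ∀ (m : ℕ) (V : Type) [AddCommGroup V] [Module F V] [FiniteDimensional F V],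
      finrank F V = m → Nat.card (GFlag F V m) = phiN q m := by
  intro m
  induction m with
  | zero =>
    intro V _ _ _ hm
    haveI : Unique (GFlag F V 0) := by
      refine ⟨⟨⟨fun _ => ⊥, monotone_const, fun k => ?_⟩⟩, ?_⟩
      · have hk : (k : ℕ) = 0 := by have := k.isLt; omega
        simp [hk, finrank_bot]
      · intro c
        apply Subtype.ext
        funext k
        have hk : (k : ℕ) = 0 := by have := k.isLt; omega
        have h1 : finrank F (c.1 k) = 0 := (c.2.2 k).trans hk
        show c.1 k = (⊥ : Submodule F V)
        exact rank_zero_eq_bot _ h1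
    rw [Nat.card_unique, phiN_zero]
  | succ m ih =>
    intro V _ _ _ hm
    haveI : Finite (Submodule F V) := finite_submodule
    haveI : Fintype {Z : Submodule F V // finrank F Z = 1} := Fintype.ofFinite _
    haveI : Finite (GFlag F V (m + 1)) := finite_gflag _
    have e1 : GFlag F V (m + 1) ≃ {c : GFlag F V (m + 1) // (fun _ => True) c} :=
      (Equiv.subtypeUnivEquiv (fun _ => trivial)).symm
    rw [Nat.card_congr (e1.trans (flagSigmaEquiv m _)), nat_card_sigma]
    have hval : ∀ Z : {Z : Submodule F V // finrank F Z = 1},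
        Nat.card {c : GFlag F V (m + 1) // c.1 ⟨1, by omega⟩ = Z.1 ∧ True} = phiN q m := by
      intro Z
      haveI : FiniteDimensional F (V ⧸ Z.1) := inferInstance
      rw [Nat.card_congr (fiberCondEquiv Z.1 Z.2 m _ (fun _ => True) (fun _ => Iff.rfl))]
      rw [Nat.card_congr (Equiv.subtypeUnivEquiv (fun _ => trivial))]
      exact ih (V ⧸ Z.1) (finrank_quot Z.1 Z.2 m hm)
    rw [Finset.sum_congr rfl (fun Z _ => hval Z), Finset.sum_const, smul_eq_mul,
      Finset.card_univ, ← Nat.card_eq_fintype_card, card_points q hq (m + 1) hm,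
      phiN_succ]
    ring

end Decomp
section L2
variable {F : Type} [Field F] [Fintype F]

lemma flag_card_one (q : ℕ) (hq : Fintype.card F = q) :
    ∀ (m : ℕ) (V : Type) [AddCommGroup V] [Module F V] [FiniteDimensional F V],
      finrank F V = m + 1 → ∀ (X : Submodule F V), finrank F X = 1 → ∀ i : ℕ, i ≤ m →
      Nat.card {c : GFlag F V (m + 1) // gtype c X = i + 1} = phiN q m * q ^ i := by
  intro m
  induction m with
  | zero =>
    intro V _ _ _ hm X hX i hi
    interval_cases i
    have hall : ∀ c : GFlag F V 1, gtype c X = 1 := by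
      intro c
      refine gtype_eq_one c X (rank_one_ne_bot X hX) (by omega) ?_
      have : c.1 ⟨1, by omega⟩ = ⊤ :=
        Submodule.eq_top_of_finrank_eq ((c.2.2 ⟨1, by omega⟩).trans hm.symm)
      rw [this]
      exact le_top
    rw [Nat.card_congr (Equiv.subtypeUnivEquiv hall), flag_card_total q hq 1 V hm]
    simp [phiN_succ, phiN_zero, natgeom_one]
  | succ m ih =>
    intro V _ _ _ hm X hX i hi
    classical
    haveI : Finite (Submodule F V) := finite_submodule
    haveI : Fintype {Z : Submodule F V // finrank F Z = 1} := Fintype.ofFinite _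
    haveI : Finite (GFlag F V (m + 2)) := finite_gflag _
    rw [Nat.card_congr (flagSigmaEquiv (m + 1) (fun c => gtype c X = i + 1)), nat_card_sigma]
    have hXne : X ≠ ⊥ := rank_one_ne_bot X hX
    -- fiber values
    have hfib : ∀ Z : {Z : Submodule F V // finrank F Z = 1},
        Nat.card {c : GFlag F V (m + 2) // c.1 ⟨1, by omega⟩ = Z.1 ∧ gtype c X = i + 1} =
          if Z.1 = X then (if i = 0 then phiN q (m + 1) else 0)
          else (if i = 0 then 0 else phiN q m * q ^ (i - 1)) := by
      rintro ⟨Zv, hZv⟩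
      by_cases hZX : Zv = X
      · rw [if_pos hZX]
        have hone : ∀ c : {c : GFlag F V (m + 2) // c.1 ⟨1, by omega⟩ = Zv},
            gtype c.1 X = 1 := by
          intro c
          refine gtype_eq_one c.1 X hXne (by omega) ?_
          rw [c.2]
          exact le_of_eq hZX.symm
        rcases Nat.eq_zero_or_pos i with hi0 | hi0
        · subst hi0
          simp only [if_pos rfl]
          rw [Nat.card_congr (fiberCondEquiv Zv hZv (m + 1) _ (fun _ => True)
            (fun c => iff_of_true (hone c) trivial))]
          rw [Nat.card_congr (Equiv.subtypeUnivEquiv (fun _ => trivial))]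
          exact flag_card_total q hq (m + 1) (V ⧸ Zv) (finrank_quot Zv hZv (m + 1) hm)
        · rw [if_neg (by omega)]
          haveI : IsEmpty {c : GFlag F V (m + 2) // c.1 ⟨1, by omega⟩ = Zv ∧
              gtype c X = i + 1} := by
            refine ⟨fun c => ?_⟩
            have h1 := hone ⟨c.1, c.2.1⟩
            have h2 := c.2.2
            simp only at h1
            omega
          exact Nat.card_of_isEmpty
      · rw [if_neg hZX]
        have hdisj : X ⊓ Zv = ⊥ := points_disjoint X Zv hX hZv (fun h => hZX h.symm)
        have hXbar : finrank F (X.map Zv.mkQ) = 1 := by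
          rw [finrank_map_mkQ_of_disjoint Zv X hdisj]
          exact hX
        have htrans : ∀ c : {c : GFlag F V (m + 2) // c.1 ⟨1, by omega⟩ = Zv},
            gtype c.1 X = gtype (quotFlagEquiv Zv hZv (m + 1) c) (X.map Zv.mkQ) + 1 :=
          fun c => gtype_quotFlagEquiv Zv hZv (m + 1) c X hXne
        rcases Nat.eq_zero_or_pos i with hi0 | hi0
        · subst hi0
          simp only [if_pos rfl]
          haveI : IsEmpty {c : GFlag F V (m + 2) // c.1 ⟨1, by omega⟩ = Zv ∧
              gtype c X = 0 + 1} := by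
            refine ⟨fun c => ?_⟩
            have h1 := htrans ⟨c.1, c.2.1⟩
            have h2 := c.2.2
            have h3 := gtype_ne_zero (quotFlagEquiv Zv hZv (m + 1) ⟨c.1, c.2.1⟩)
              (X.map Zv.mkQ) (rank_one_ne_bot _ hXbar)
            simp only at h1
            omega
          exact Nat.card_of_isEmpty
        · obtain ⟨i', rfl⟩ : ∃ i', i = i' + 1 := ⟨i - 1, by omega⟩
          rw [if_neg (by omega)]
          rw [Nat.card_congr (fiberCondEquiv Zv hZv (m + 1) _
            (fun d => gtype d (X.map Zv.mkQ) = i' + 1)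
            (fun c => by rw [htrans c]; omega))]
          have := ih (V ⧸ Zv) (finrank_quot Zv hZv (m + 1) hm) (X.map Zv.mkQ) hXbar i' (by omega)
          rw [this]
          simp
    rw [Finset.sum_congr rfl (fun Z _ => hfib Z)]
    -- now evaluate the sum
    have hXmem : (⟨X, hX⟩ : {Z : Submodule F V // finrank F Z = 1}) ∈ Finset.univ :=
      Finset.mem_univ _
    rw [← Finset.add_sum_erase _ _ hXmem]
    have herase : ∀ Z ∈ Finset.univ.erase (⟨X, hX⟩ : {Z : Submodule F V // finrank F Z = 1}),
        (if Z.1 = X then (if i = 0 then phiN q (m + 1) else 0)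
          else (if i = 0 then 0 else phiN q m * q ^ (i - 1))) =
        (if i = 0 then 0 else phiN q m * q ^ (i - 1)) := by
      intro Z hZ
      rw [if_neg]
      intro h
      exact (Finset.mem_erase.mp hZ).1 (Subtype.ext h)
    rw [Finset.sum_congr rfl herase, Finset.sum_const, smul_eq_mul,
      Finset.card_erase_of_mem hXmem, Finset.card_univ, ← Nat.card_eq_fintype_card,
      card_points q hq (m + 2) hm]
    simp only [if_pos rfl]
    rcases Nat.eq_zero_or_pos i with hi0 | hi0
    · subst hi0
      simp [pow_zero]
    · obtain ⟨i', rfl⟩ : ∃ i', i = i' + 1 := ⟨i - 1, by omega⟩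
      have hne : ¬ (i' + 1 = 0) := by omega
      simp only [if_neg hne]
      have hger : natgeom q (m + 2) - 1 = q * natgeom q (m + 1) := by
        rw [natgeom_succ]
        omega
      rw [hger, phiN_succ]
      simp only [Nat.add_sub_cancel]
      ring_nf
      simp
end L2
section L3Fibers
variable {F : Type} [Field F] [Fintype F] {V : Type} [AddCommGroup V] [Module F V]
  [FiniteDimensional F V]

-- fiber at Z = X, types (1, j'+2)
lemma fiberX_card (q : ℕ) (hq : Fintype.card F = q) (m : ℕ) (hm : finrank F V = m + 2)
    (X Y : Submodule F V) (hX : finrank F X = 1) (hY : finrank F Y = 1) (hne : X ≠ Y)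
    (j' : ℕ) (hj' : j' ≤ m) :
    Nat.card {c : GFlag F V (m + 2) // c.1 ⟨1, by omega⟩ = X ∧
      gtype c X = 0 + 1 ∧ gtype c Y = (j' + 1) + 1} = phiN q m * q ^ j' := by
  have hYne : Y ≠ ⊥ := rank_one_ne_bot Y hY
  have hdisj : Y ⊓ X = ⊥ := points_disjoint Y X hY hX (fun h => hne h.symm)
  have hYbar : finrank F (Y.map X.mkQ) = 1 := by
    rw [finrank_map_mkQ_of_disjoint X Y hdisj]; exact hY
  have hone : ∀ c : {c : GFlag F V (m + 2) // c.1 ⟨1, by omega⟩ = X}, gtype c.1 X = 1 :=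
    fun c => gtype_eq_one c.1 X (rank_one_ne_bot X hX) (by omega) (le_of_eq c.2.symm)
  have htr : ∀ c : {c : GFlag F V (m + 2) // c.1 ⟨1, by omega⟩ = X},
      gtype c.1 Y = gtype (quotFlagEquiv X hX (m + 1) c) (Y.map X.mkQ) + 1 :=
    fun c => gtype_quotFlagEquiv X hX (m + 1) c Y hYne
  rw [Nat.card_congr (fiberCondEquiv X hX (m + 1) _
    (fun d => gtype d (Y.map X.mkQ) = j' + 1)
    (fun c => by
      constructor
      · rintro ⟨-, h2⟩
        have := htr c
        omega
      · intro h
        exact ⟨hone c, by rw [htr c]; omega⟩))]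
  exact flag_card_one q hq m (V ⧸ X) (finrank_quot X hX (m + 1) hm) (Y.map X.mkQ) hYbar j' hj'

lemma fiberX_empty (m : ℕ) (hm : finrank F V = m + 2)
    (X Y : Submodule F V) (hX : finrank F X = 1) (hY : finrank F Y = 1) (hne : X ≠ Y)
    (i j : ℕ) (h : ¬ (i = 0 ∧ 1 ≤ j)) :
    Nat.card {c : GFlag F V (m + 2) // c.1 ⟨1, by omega⟩ = X ∧
      gtype c X = i + 1 ∧ gtype c Y = j + 1} = 0 := by
  have hYne : Y ≠ ⊥ := rank_one_ne_bot Y hY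
  have hdisj : Y ⊓ X = ⊥ := points_disjoint Y X hY hX (fun h => hne h.symm)
  have hYbar : finrank F (Y.map X.mkQ) = 1 := by
    rw [finrank_map_mkQ_of_disjoint X Y hdisj]; exact hY
  haveI : IsEmpty {c : GFlag F V (m + 2) // c.1 ⟨1, by omega⟩ = X ∧
      gtype c X = i + 1 ∧ gtype c Y = j + 1} := by
    refine ⟨fun c => ?_⟩
    have h1 : gtype c.1 X = 1 :=
      gtype_eq_one c.1 X (rank_one_ne_bot X hX) (by omega) (le_of_eq c.2.1.symm)
    have h2 := gtype_quotFlagEquiv X hX (m + 1) ⟨c.1, c.2.1⟩ Y hYne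
    have h3 := gtype_ne_zero (quotFlagEquiv X hX (m + 1) ⟨c.1, c.2.1⟩)
      (Y.map X.mkQ) (rank_one_ne_bot _ hYbar)
    have h4 := c.2.2.1
    have h5 := c.2.2.2
    simp only at h2
    omega
  exact Nat.card_of_isEmpty

-- fibers at Z ∉ {X, Y}
lemma fiber_other_equiv (m : ℕ) (hm : finrank F V = m + 2)
    (X Y Z : Submodule F V) (hX : finrank F X = 1) (hY : finrank F Y = 1)
    (hZ : finrank F Z = 1) (hZX : Z ≠ X) (hZY : Z ≠ Y) (i' j' : ℕ) :
    Nat.card {c : GFlag F V (m + 2) // c.1 ⟨1, by omega⟩ = Z ∧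
      gtype c X = (i' + 1) + 1 ∧ gtype c Y = (j' + 1) + 1} =
    Nat.card {d : GFlag F (V ⧸ Z) (m + 1) //
      gtype d (X.map Z.mkQ) = i' + 1 ∧ gtype d (Y.map Z.mkQ) = j' + 1} := by
  have htrX : ∀ c : {c : GFlag F V (m + 2) // c.1 ⟨1, by omega⟩ = Z},
      gtype c.1 X = gtype (quotFlagEquiv Z hZ (m + 1) c) (X.map Z.mkQ) + 1 :=
    fun c => gtype_quotFlagEquiv Z hZ (m + 1) c X (rank_one_ne_bot X hX)
  have htrY : ∀ c : {c : GFlag F V (m + 2) // c.1 ⟨1, by omega⟩ = Z},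
      gtype c.1 Y = gtype (quotFlagEquiv Z hZ (m + 1) c) (Y.map Z.mkQ) + 1 :=
    fun c => gtype_quotFlagEquiv Z hZ (m + 1) c Y (rank_one_ne_bot Y hY)
  exact Nat.card_congr (fiberCondEquiv Z hZ (m + 1) _
    (fun d => gtype d (X.map Z.mkQ) = i' + 1 ∧ gtype d (Y.map Z.mkQ) = j' + 1)
    (fun c => by
      have h1 := htrX c
      have h2 := htrY c
      constructor
      · rintro ⟨ha, hb⟩
        exact ⟨by omega, by omega⟩
      · rintro ⟨ha, hb⟩
        exact ⟨by omega, by omega⟩))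

lemma fiber_other_empty (m : ℕ) (hm : finrank F V = m + 2)
    (X Y Z : Submodule F V) (hX : finrank F X = 1) (hY : finrank F Y = 1)
    (hZ : finrank F Z = 1) (hZX : Z ≠ X) (hZY : Z ≠ Y) (i j : ℕ) (h : i = 0 ∨ j = 0) :
    Nat.card {c : GFlag F V (m + 2) // c.1 ⟨1, by omega⟩ = Z ∧
      gtype c X = i + 1 ∧ gtype c Y = j + 1} = 0 := by
  have hXbar : finrank F (X.map Z.mkQ) = 1 := by
    rw [finrank_map_mkQ_of_disjoint Z X (points_disjoint X Z hX hZ (fun h => hZX h.symm))]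
    exact hX
  have hYbar : finrank F (Y.map Z.mkQ) = 1 := by
    rw [finrank_map_mkQ_of_disjoint Z Y (points_disjoint Y Z hY hZ (fun h => hZY h.symm))]
    exact hY
  haveI : IsEmpty {c : GFlag F V (m + 2) // c.1 ⟨1, by omega⟩ = Z ∧
      gtype c X = i + 1 ∧ gtype c Y = j + 1} := by
    refine ⟨fun c => ?_⟩
    have h1 := gtype_quotFlagEquiv Z hZ (m + 1) ⟨c.1, c.2.1⟩ X (rank_one_ne_bot X hX)
    have h2 := gtype_quotFlagEquiv Z hZ (m + 1) ⟨c.1, c.2.1⟩ Y (rank_one_ne_bot Y hY)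
    have h3 := gtype_ne_zero (quotFlagEquiv Z hZ (m + 1) ⟨c.1, c.2.1⟩)
      (X.map Z.mkQ) (rank_one_ne_bot _ hXbar)
    have h4 := gtype_ne_zero (quotFlagEquiv Z hZ (m + 1) ⟨c.1, c.2.1⟩)
      (Y.map Z.mkQ) (rank_one_ne_bot _ hYbar)
    have h5 := c.2.2.1
    have h6 := c.2.2.2
    simp only at h1 h2
    omega
  exact Nat.card_of_isEmpty

-- near fibers: Z ≤ X ⊔ Y, Z ∉ {X, Y}
lemma near_maps_eq (m : ℕ) (hm : finrank F V = m + 2)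
    (X Y Z : Submodule F V) (hX : finrank F X = 1) (hY : finrank F Y = 1) (hne : X ≠ Y)
    (hZ : finrank F Z = 1) (hZP : Z ≤ X ⊔ Y) (hZX : Z ≠ X) (hZY : Z ≠ Y) :
    X.map Z.mkQ = Y.map Z.mkQ := by
  have hP : finrank F (X ⊔ Y : Submodule F V) = 2 := by
    have h1 := Submodule.finrank_sup_add_finrank_inf_eq X Y
    rw [points_disjoint X Y hX hY hne] at h1
    rw [hX, hY] at h1
    simpa [finrank_bot] using h1
  have hPbar : finrank F ((X ⊔ Y : Submodule F V).map Z.mkQ) = 1 := by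
    have := finrank_map_mkQ Z (X ⊔ Y) hZP
    omega
  have hXbar : finrank F (X.map Z.mkQ) = 1 := by
    rw [finrank_map_mkQ_of_disjoint Z X (points_disjoint X Z hX hZ (fun h => hZX h.symm))]
    exact hX
  have hYbar : finrank F (Y.map Z.mkQ) = 1 := by
    rw [finrank_map_mkQ_of_disjoint Z Y (points_disjoint Y Z hY hZ (fun h => hZY h.symm))]
    exact hY
  have e1 : X.map Z.mkQ = (X ⊔ Y : Submodule F V).map Z.mkQ :=
    point_eq_of_le _ _ hXbar hPbar (Submodule.map_mono le_sup_left)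
  have e2 : Y.map Z.mkQ = (X ⊔ Y : Submodule F V).map Z.mkQ :=
    point_eq_of_le _ _ hYbar hPbar (Submodule.map_mono le_sup_right)
  rw [e1, e2]

lemma fiber_near_card (q : ℕ) (hq : Fintype.card F = q) (m : ℕ) (hm : finrank F V = m + 2)
    (X Y Z : Submodule F V) (hX : finrank F X = 1) (hY : finrank F Y = 1) (hne : X ≠ Y)
    (hZ : finrank F Z = 1) (hZP : Z ≤ X ⊔ Y) (hZX : Z ≠ X) (hZY : Z ≠ Y)
    (i' : ℕ) (hi' : i' ≤ m) :
    Nat.card {c : GFlag F V (m + 2) // c.1 ⟨1, by omega⟩ = Z ∧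
      gtype c X = (i' + 1) + 1 ∧ gtype c Y = (i' + 1) + 1} = phiN q m * q ^ i' := by
  rw [fiber_other_equiv m hm X Y Z hX hY hZ hZX hZY i' i',
    near_maps_eq m hm X Y Z hX hY hne hZ hZP hZX hZY]
  have e : {d : GFlag F (V ⧸ Z) (m + 1) //
      gtype d (Y.map Z.mkQ) = i' + 1 ∧ gtype d (Y.map Z.mkQ) = i' + 1} ≃
    {d : GFlag F (V ⧸ Z) (m + 1) // gtype d (Y.map Z.mkQ) = i' + 1} :=
    Equiv.subtypeEquivRight (fun d => and_self_iff)
  rw [Nat.card_congr e]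
  have hYbar : finrank F (Y.map Z.mkQ) = 1 := by
    rw [finrank_map_mkQ_of_disjoint Z Y (points_disjoint Y Z hY hZ (fun h => hZY h.symm))]
    exact hY
  exact flag_card_one q hq m (V ⧸ Z) (finrank_quot Z hZ (m + 1) hm) (Y.map Z.mkQ) hYbar i' hi'

lemma fiber_near_empty (m : ℕ) (hm : finrank F V = m + 2)
    (X Y Z : Submodule F V) (hX : finrank F X = 1) (hY : finrank F Y = 1) (hne : X ≠ Y)
    (hZ : finrank F Z = 1) (hZP : Z ≤ X ⊔ Y) (hZX : Z ≠ X) (hZY : Z ≠ Y)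
    (i j : ℕ) (hij : i ≠ j) :
    Nat.card {c : GFlag F V (m + 2) // c.1 ⟨1, by omega⟩ = Z ∧
      gtype c X = i + 1 ∧ gtype c Y = j + 1} = 0 := by
  rcases Nat.eq_zero_or_pos i with h0 | h0
  · exact fiber_other_empty m hm X Y Z hX hY hZ hZX hZY i j (Or.inl h0)
  rcases Nat.eq_zero_or_pos j with h1 | h1
  · exact fiber_other_empty m hm X Y Z hX hY hZ hZX hZY i j (Or.inr h1)
  obtain ⟨i', rfl⟩ : ∃ i', i = i' + 1 := ⟨i - 1, by omega⟩
  obtain ⟨j', rfl⟩ : ∃ j', j = j' + 1 := ⟨j - 1, by omega⟩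
  rw [fiber_other_equiv m hm X Y Z hX hY hZ hZX hZY i' j',
    near_maps_eq m hm X Y Z hX hY hne hZ hZP hZX hZY]
  haveI : IsEmpty {d : GFlag F (V ⧸ Z) (m + 1) //
      gtype d (Y.map Z.mkQ) = i' + 1 ∧ gtype d (Y.map Z.mkQ) = j' + 1} := by
    refine ⟨fun d => ?_⟩
    have := d.2.1
    have := d.2.2
    omega
  exact Nat.card_of_isEmpty

end L3Fibers
section L3Core

lemma natgeom_two (q : ℕ) : natgeom q 2 = q + 1 := by
  simp [natgeom, Finset.sum_range_succ]
  omega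

lemma natgeom_two_step (q m : ℕ) : natgeom q (m + 2) = q * q * natgeom q m + q + 1 := by
  rw [natgeom_succ, natgeom_succ]
  ring

lemma sum_eval {α : Type} [Fintype α] [DecidableEq α] (f : α → ℚ) (p : α → Prop)
    [DecidablePred p] (a b : α) (ha : p a) (hb : p b) (hab : a ≠ b) (fa fb u v : ℚ)
    (hfa : f a = fa) (hfb : f b = fb)
    (hu : ∀ z, p z → z ≠ a → z ≠ b → f z = u) (hv : ∀ z, ¬ p z → f z = v) :
    ∑ z, f z = fa + fb + (((Finset.univ.filter p).card - 2 : ℕ) : ℚ) * u +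
      (((Finset.univ.filter (fun z => ¬ p z)).card : ℕ) : ℚ) * v := by
  have haT : a ∈ Finset.univ.filter p := Finset.mem_filter.mpr ⟨Finset.mem_univ _, ha⟩
  have hbT : b ∈ (Finset.univ.filter p).erase a :=
    Finset.mem_erase.mpr ⟨fun h => hab h.symm, Finset.mem_filter.mpr ⟨Finset.mem_univ _, hb⟩⟩
  rw [← Finset.sum_filter_add_sum_filter_not Finset.univ p f]
  have h1 : ∑ z ∈ Finset.univ.filter (fun z => ¬ p z), f z =
      (((Finset.univ.filter (fun z => ¬ p z)).card : ℕ) : ℚ) * v := by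
    rw [Finset.sum_congr rfl (fun z hz => hv z (Finset.mem_filter.mp hz).2),
      Finset.sum_const, nsmul_eq_mul]
  have h2 : ∑ z ∈ Finset.univ.filter p, f z =
      fa + fb + (((Finset.univ.filter p).card - 2 : ℕ) : ℚ) * u := by
    rw [← Finset.add_sum_erase _ f haT, ← Finset.add_sum_erase _ f hbT]
    have h3 : ∑ z ∈ ((Finset.univ.filter p).erase a).erase b, f z =
        ((((Finset.univ.filter p).erase a).erase b).card : ℚ) * u := by
      rw [Finset.sum_congr rfl (fun z hz => by
        have hz1 := Finset.mem_erase.mp hz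
        have hz2 := Finset.mem_erase.mp hz1.2
        exact hu z (Finset.mem_filter.mp hz2.2).2 hz2.1 hz1.1),
        Finset.sum_const, nsmul_eq_mul]
    rw [h3, Finset.card_erase_of_mem hbT, Finset.card_erase_of_mem haT, hfa, hfb]
    have : (Finset.univ.filter p).card - 1 - 1 = (Finset.univ.filter p).card - 2 := by omega
    rw [this]
    ring
  rw [h1, h2]

variable {F : Type} [Field F] [Fintype F] {V : Type} [AddCommGroup V] [Module F V]
  [FiniteDimensional F V]

lemma sup_points_rank2 (X Y : Submodule F V) (hX : finrank F X = 1) (hY : finrank F Y = 1)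
    (hne : X ≠ Y) : finrank F (X ⊔ Y : Submodule F V) = 2 := by
  have h1 := Submodule.finrank_sup_add_finrank_inf_eq X Y
  rw [points_disjoint X Y hX hY hne] at h1
  rw [hX, hY] at h1
  simpa [finrank_bot] using h1

lemma point_not_le_disjoint (Z P : Submodule F V) (hZ : finrank F Z = 1) (h : ¬ Z ≤ P) :
    P ⊓ Z = ⊥ := by
  by_contra hb
  have h1 : 1 ≤ finrank F (P ⊓ Z : Submodule F V) := by
    rcases Nat.eq_zero_or_pos (finrank F (P ⊓ Z : Submodule F V)) with h2 | h2
    · exact absurd (Submodule.finrank_eq_zero.mp h2) hb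
    · exact h2
  have h2 : P ⊓ Z = Z := Submodule.eq_of_le_of_finrank_le inf_le_right (by omega)
  exact h (h2 ▸ inf_le_left)

lemma far_maps_ne (X Y Z : Submodule F V) (hX : finrank F X = 1) (hY : finrank F Y = 1)
    (hZ : finrank F Z = 1) (hne : X ≠ Y) (hnle : ¬ Z ≤ X ⊔ Y) :
    X.map Z.mkQ ≠ Y.map Z.mkQ := by
  intro heq
  have hdisj : (X ⊔ Y : Submodule F V) ⊓ Z = ⊥ := point_not_le_disjoint Z (X ⊔ Y) hZ hnle
  have hPbar : finrank F ((X ⊔ Y : Submodule F V).map Z.mkQ) = 2 := by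
    rw [finrank_map_mkQ_of_disjoint Z (X ⊔ Y) hdisj]
    exact sup_points_rank2 X Y hX hY hne
  have hsup : (X ⊔ Y : Submodule F V).map Z.mkQ = X.map Z.mkQ := by
    rw [Submodule.map_sup, ← heq, sup_idem]
  have hXbar : finrank F (X.map Z.mkQ) = 1 := by
    have hZX : Z ≠ X := fun h => hnle (h ▸ le_sup_left)
    rw [finrank_map_mkQ_of_disjoint Z X (points_disjoint X Z hX hZ (fun h => hZX h.symm))]
    exact hX
  rw [hsup, hXbar] at hPbar
  omega

lemma l3_core (q : ℕ) (hq : Fintype.card F = q) (m : ℕ)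
    (hm : finrank F V = m + 2) (X Y : Submodule F V) (hX : finrank F X = 1)
    (hY : finrank F Y = 1) (hne : X ≠ Y) (i j : ℕ) (hi : i ≤ m + 1) (hj : j ≤ m + 1)
    (hfar : ∀ Z : Submodule F V, finrank F Z = 1 → ¬ Z ≤ X ⊔ Y → ∀ i' j' : ℕ,
      i = i' + 1 → j = j' + 1 →
      (q : ℚ) * (Nat.card {d : GFlag F (V ⧸ Z) (m + 1) //
        gtype d (X.map Z.mkQ) = i' + 1 ∧ gtype d (Y.map Z.mkQ) = j' + 1} : ℚ) =
        (phiN q (m - 1) : ℚ) * (q : ℚ) ^ i' * ((q : ℚ) ^ j' - (if i' = j' then 1 else 0))) :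
    (q : ℚ) * (Nat.card {c : GFlag F V (m + 2) //
        gtype c X = i + 1 ∧ gtype c Y = j + 1} : ℚ) =
      (phiN q m : ℚ) * (q : ℚ) ^ i * ((q : ℚ) ^ j - (if i = j then 1 else 0)) := by
  classical
  haveI : Finite (Submodule F V) := finite_submodule
  haveI : Fintype {Z : Submodule F V // finrank F Z = 1} := Fintype.ofFinite _
  haveI : Finite (GFlag F V (m + 2)) := finite_gflag _
  have hq2 : 2 ≤ q := by rw [← hq]; exact Fintype.one_lt_card
  set X' : {Z : Submodule F V // finrank F Z = 1} := ⟨X, hX⟩ with hX'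
  set Y' : {Z : Submodule F V // finrank F Z = 1} := ⟨Y, hY⟩ with hY'
  have hne' : X' ≠ Y' := fun h => hne (congrArg Subtype.val h)
  set p : {Z : Submodule F V // finrank F Z = 1} → Prop := fun Z => Z.1 ≤ X ⊔ Y with hp
  -- cardinalities of classes
  have hTcard : (Finset.univ.filter p).card = q + 1 := by
    have e1 : (Finset.univ.filter p).card = Nat.card {Z : {Z : Submodule F V // finrank F Z = 1} // p Z} := by
      rw [Nat.card_eq_fintype_card, Fintype.card_subtype]
    have e2 : Nat.card {Z : {Z : Submodule F V // finrank F Z = 1} // p Z} =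
        Nat.card {Z : Submodule F V // finrank F Z = 1 ∧ Z ≤ X ⊔ Y} := by
      rw [hp]
      exact Nat.card_congr (Equiv.subtypeSubtypeEquivSubtypeInter
        (fun Z : Submodule F V => finrank F Z = 1) (fun Z => Z ≤ X ⊔ Y))
    rw [e1, e2, card_points_le q hq (X ⊔ Y) 2 (sup_points_rank2 X Y hX hY hne), natgeom_two]
  have hFcard : (Finset.univ.filter (fun Z => ¬ p Z)).card = q * q * natgeom q m := by
    have e1 := Finset.card_filter_add_card_filter_not (s := Finset.univ) (p := p)
    rw [hTcard, Finset.card_univ, ← Nat.card_eq_fintype_card,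
      card_points q hq (m + 2) hm, natgeom_two_step] at e1
    omega
  -- decompose
  rw [Nat.card_congr (flagSigmaEquiv (m + 1)
    (fun c => gtype c X = i + 1 ∧ gtype c Y = j + 1)), nat_card_sigma,
    Nat.cast_sum, Finset.mul_sum]
  have hcast2 : (((q + 1 : ℕ) - 2 : ℕ) : ℚ) = (q : ℚ) - 1 := by
    have : (q + 1 : ℕ) - 2 = q - 1 := by omega
    rw [this, Nat.cast_sub (by omega)]
    norm_num
  rcases i with _ | i'
  · rcases j with _ | j'
    · -- (0,0): everything empty
      have hall : ∀ Z : {Z : Submodule F V // finrank F Z = 1}, (q : ℚ) * (Nat.card {c : GFlag F V (m + 2) //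
          c.1 ⟨1, by omega⟩ = Z.1 ∧ gtype c X = 0 + 1 ∧ gtype c Y = 0 + 1} : ℚ) = 0 := by
        rintro ⟨Zv, hZv⟩
        by_cases hzx : Zv = X
        · rw [show (Nat.card {c : GFlag F V (m + 2) //
              c.1 ⟨1, by omega⟩ = Zv ∧ gtype c X = 0 + 1 ∧ gtype c Y = 0 + 1}) = 0 from by
            rw [hzx]; exact fiberX_empty m hm X Y hX hY hne 0 0 (by omega)]
          norm_num
        · by_cases hzy : Zv = Y
          · have e : {c : GFlag F V (m + 2) //
                c.1 ⟨1, by omega⟩ = Zv ∧ gtype c X = 0 + 1 ∧ gtype c Y = 0 + 1} ≃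
              {c : GFlag F V (m + 2) //
                c.1 ⟨1, by omega⟩ = Zv ∧ gtype c Y = 0 + 1 ∧ gtype c X = 0 + 1} :=
              Equiv.subtypeEquivRight (fun c => by tauto)
            rw [Nat.card_congr e, show (Nat.card {c : GFlag F V (m + 2) //
              c.1 ⟨1, by omega⟩ = Zv ∧ gtype c Y = 0 + 1 ∧ gtype c X = 0 + 1}) = 0 from by
                rw [hzy]; exact fiberX_empty m hm Y X hY hX hne.symm 0 0 (by omega)]
            norm_num
          · rw [fiber_other_empty m hm X Y Zv hX hY hZv hzx hzy 0 0 (Or.inl rfl)]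
            norm_num
      rw [Finset.sum_congr rfl (fun Z _ => hall Z), Finset.sum_const]
      norm_num
    · -- (0, j'+1): only X' contributes
      have hXval : (q : ℚ) * (Nat.card {c : GFlag F V (m + 2) //
          c.1 ⟨1, by omega⟩ = X'.1 ∧ gtype c X = 0 + 1 ∧
            gtype c Y = (j' + 1) + 1} : ℚ) =
          (q : ℚ) * ((phiN q m * q ^ j' : ℕ) : ℚ) := by
        rw [fiberX_card q hq m hm X Y hX hY hne j' (by omega)]
      have hrest : ∀ Z : {Z : Submodule F V // finrank F Z = 1}, Z ≠ X' → (q : ℚ) * (Nat.card {c : GFlag F V (m + 2) //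
          c.1 ⟨1, by omega⟩ = Z.1 ∧ gtype c X = 0 + 1 ∧
            gtype c Y = (j' + 1) + 1} : ℚ) = 0 := by
        rintro ⟨Zv, hZv⟩ hzx'
        have hzx : Zv ≠ X := fun h => hzx' (Subtype.ext h)
        by_cases hzy : Zv = Y
        · have e : {c : GFlag F V (m + 2) //
              c.1 ⟨1, by omega⟩ = Zv ∧ gtype c X = 0 + 1 ∧ gtype c Y = (j' + 1) + 1} ≃
            {c : GFlag F V (m + 2) //
              c.1 ⟨1, by omega⟩ = Zv ∧ gtype c Y = (j' + 1) + 1 ∧ gtype c X = 0 + 1} :=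
            Equiv.subtypeEquivRight (fun c => by tauto)
          rw [Nat.card_congr e, show (Nat.card {c : GFlag F V (m + 2) //
            c.1 ⟨1, by omega⟩ = Zv ∧ gtype c Y = (j' + 1) + 1 ∧ gtype c X = 0 + 1}) = 0 from by
              rw [hzy]; exact fiberX_empty m hm Y X hY hX hne.symm (j' + 1) 0 (by omega)]
          norm_num
        · rw [fiber_other_empty m hm X Y Zv hX hY hZv hzx hzy 0 (j' + 1) (Or.inl rfl)]
          norm_num
      rw [Finset.sum_eq_single_of_mem X' (Finset.mem_univ _)
        (fun Z _ hZ => hrest Z hZ), hXval]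
      rw [if_neg (by omega)]
      push_cast
      ring
  · rcases j with _ | j'
    · -- (i'+1, 0): only Y' contributes
      have hYval : (q : ℚ) * (Nat.card {c : GFlag F V (m + 2) //
          c.1 ⟨1, by omega⟩ = Y'.1 ∧ gtype c X = (i' + 1) + 1 ∧
            gtype c Y = 0 + 1} : ℚ) =
          (q : ℚ) * ((phiN q m * q ^ i' : ℕ) : ℚ) := by
        have e : {c : GFlag F V (m + 2) //
            c.1 ⟨1, by omega⟩ = Y ∧ gtype c X = (i' + 1) + 1 ∧ gtype c Y = 0 + 1} ≃
          {c : GFlag F V (m + 2) //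
            c.1 ⟨1, by omega⟩ = Y ∧ gtype c Y = 0 + 1 ∧ gtype c X = (i' + 1) + 1} :=
          Equiv.subtypeEquivRight (fun c => by tauto)
        rw [show Nat.card {c : GFlag F V (m + 2) //
            c.1 ⟨1, by omega⟩ = Y'.1 ∧ gtype c X = (i' + 1) + 1 ∧ gtype c Y = 0 + 1} =
          phiN q m * q ^ i' from (Nat.card_congr e).trans
            (fiberX_card q hq m hm Y X hY hX hne.symm i' (by omega))]
      have hrest : ∀ Z : {Z : Submodule F V // finrank F Z = 1}, Z ≠ Y' → (q : ℚ) * (Nat.card {c : GFlag F V (m + 2) //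
          c.1 ⟨1, by omega⟩ = Z.1 ∧ gtype c X = (i' + 1) + 1 ∧
            gtype c Y = 0 + 1} : ℚ) = 0 := by
        rintro ⟨Zv, hZv⟩ hzy'
        have hzy : Zv ≠ Y := fun h => hzy' (Subtype.ext h)
        by_cases hzx : Zv = X
        · rw [show (Nat.card {c : GFlag F V (m + 2) //
            c.1 ⟨1, by omega⟩ = Zv ∧ gtype c X = (i' + 1) + 1 ∧ gtype c Y = 0 + 1}) = 0 from by
              rw [hzx]; exact fiberX_empty m hm X Y hX hY hne (i' + 1) 0 (by omega)]
          norm_num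
        · rw [fiber_other_empty m hm X Y Zv hX hY hZv hzx hzy (i' + 1) 0 (Or.inr rfl)]
          norm_num
      rw [Finset.sum_eq_single_of_mem Y' (Finset.mem_univ _)
        (fun Z _ hZ => hrest Z hZ), hYval]
      rw [if_neg (by omega)]
      push_cast
      ring
    · -- (i'+1, j'+1)
      have hXv : (q : ℚ) * (Nat.card {c : GFlag F V (m + 2) //
          c.1 ⟨1, by omega⟩ = X'.1 ∧ gtype c X = (i' + 1) + 1 ∧
            gtype c Y = (j' + 1) + 1} : ℚ) = 0 := by
        rw [fiberX_empty m hm X Y hX hY hne (i' + 1) (j' + 1) (by omega)]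
        norm_num
      have hYv : (q : ℚ) * (Nat.card {c : GFlag F V (m + 2) //
          c.1 ⟨1, by omega⟩ = Y'.1 ∧ gtype c X = (i' + 1) + 1 ∧
            gtype c Y = (j' + 1) + 1} : ℚ) = 0 := by
        have e : {c : GFlag F V (m + 2) //
            c.1 ⟨1, by omega⟩ = Y ∧ gtype c X = (i' + 1) + 1 ∧ gtype c Y = (j' + 1) + 1} ≃
          {c : GFlag F V (m + 2) //
            c.1 ⟨1, by omega⟩ = Y ∧ gtype c Y = (j' + 1) + 1 ∧ gtype c X = (i' + 1) + 1} :=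
          Equiv.subtypeEquivRight (fun c => by tauto)
        rw [show Nat.card {c : GFlag F V (m + 2) //
            c.1 ⟨1, by omega⟩ = Y'.1 ∧ gtype c X = (i' + 1) + 1 ∧ gtype c Y = (j' + 1) + 1} =
          0 from (Nat.card_congr e).trans
            (fiberX_empty m hm Y X hY hX hne.symm (j' + 1) (i' + 1) (by omega))]
        norm_num
      have hnear : ∀ Z : {Z : Submodule F V // finrank F Z = 1}, p Z → Z ≠ X' → Z ≠ Y' →
          (q : ℚ) * (Nat.card {c : GFlag F V (m + 2) //
            c.1 ⟨1, by omega⟩ = Z.1 ∧ gtype c X = (i' + 1) + 1 ∧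
              gtype c Y = (j' + 1) + 1} : ℚ) =
          (if i' = j' then (q : ℚ) * ((phiN q m * q ^ i' : ℕ) : ℚ) else 0) := by
        rintro ⟨Zv, hZv⟩ hple hzx' hzy'
        have hzx : Zv ≠ X := fun h => hzx' (Subtype.ext h)
        have hzy : Zv ≠ Y := fun h => hzy' (Subtype.ext h)
        by_cases hij : i' = j'
        · subst hij
          rw [if_pos rfl, fiber_near_card q hq m hm X Y Zv hX hY hne hZv hple hzx hzy
            i' (by omega)]
        · rw [if_neg hij, fiber_near_empty m hm X Y Zv hX hY hne hZv hple hzx hzy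
            (i' + 1) (j' + 1) (by omega)]
          norm_num
      have hfarv : ∀ Z : {Z : Submodule F V // finrank F Z = 1}, ¬ p Z →
          (q : ℚ) * (Nat.card {c : GFlag F V (m + 2) //
            c.1 ⟨1, by omega⟩ = Z.1 ∧ gtype c X = (i' + 1) + 1 ∧
              gtype c Y = (j' + 1) + 1} : ℚ) =
          (phiN q (m - 1) : ℚ) * (q : ℚ) ^ i' * ((q : ℚ) ^ j' - (if i' = j' then 1 else 0)) := by
        rintro ⟨Zv, hZv⟩ hnp
        have hzx : Zv ≠ X := fun h => hnp (by rw [hp]; exact h ▸ le_sup_left)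
        have hzy : Zv ≠ Y := fun h => hnp (by rw [hp]; exact h ▸ le_sup_right)
        rw [fiber_other_equiv m hm X Y Zv hX hY hZv hzx hzy i' j']
        exact hfar Zv hZv hnp i' j' rfl rfl
      have hs := sum_eval (fun Z : {Z : Submodule F V // finrank F Z = 1} => (q : ℚ) * (Nat.card {c : GFlag F V (m + 2) //
          c.1 ⟨1, by omega⟩ = Z.1 ∧ gtype c X = (i' + 1) + 1 ∧
            gtype c Y = (j' + 1) + 1} : ℚ)) p X' Y'
        (le_sup_left) (le_sup_right) hne' 0 0
        (if i' = j' then (q : ℚ) * ((phiN q m * q ^ i' : ℕ) : ℚ) else 0)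
        ((phiN q (m - 1) : ℚ) * (q : ℚ) ^ i' * ((q : ℚ) ^ j' - (if i' = j' then 1 else 0)))
        hXv hYv hnear hfarv
      refine hs.trans ?_
      rw [hTcard, hFcard, hcast2]
      -- final arithmetic
      have hdelta : (if (i' + 1 : ℕ) = (j' + 1 : ℕ) then (1 : ℚ) else 0) =
          (if i' = j' then (1 : ℚ) else 0) := by
        by_cases hij : i' = j'
        · rw [if_pos (by omega), if_pos hij]
        · rw [if_neg (by omega), if_neg hij]
      rw [hdelta]
      rcases Nat.eq_zero_or_pos m with hm0 | hm0
      · -- m = 0 : forces i' = j' = 0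
        subst hm0
        have hi0 : i' = 0 := by omega
        have hj0 : j' = 0 := by omega
        subst hi0; subst hj0
        rw [if_pos rfl]
        simp [natgeom, phiN_zero]
        ring
      · obtain ⟨m'', rfl⟩ : ∃ m'', m = m'' + 1 := ⟨m - 1, by omega⟩
        have hphi : phiN q (m'' + 1) = phiN q m'' * natgeom q (m'' + 1) := phiN_succ q m''
        simp only [Nat.add_sub_cancel]
        by_cases hij : i' = j'
        · subst hij
          rw [if_pos rfl, if_pos rfl]
          push_cast [hphi]
          ring
        · rw [if_neg hij, if_neg hij]
          push_cast [hphi]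
          ring

end L3Core
section Main
variable {F : Type} [Field F] [Fintype F]

lemma flag_card_two (q : ℕ) (hq : Fintype.card F = q) :
    ∀ (m : ℕ) (V : Type) [AddCommGroup V] [Module F V] [FiniteDimensional F V],
      finrank F V = m + 2 → ∀ X Y : Submodule F V, finrank F X = 1 → finrank F Y = 1 →
      X ≠ Y → ∀ i j : ℕ, i ≤ m + 1 → j ≤ m + 1 →
      (q : ℚ) * (Nat.card {c : GFlag F V (m + 2) //
          gtype c X = i + 1 ∧ gtype c Y = j + 1} : ℚ) =
        (phiN q m : ℚ) * (q : ℚ) ^ i * ((q : ℚ) ^ j - (if i = j then 1 else 0)) := by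
  intro m
  induction m with
  | zero =>
    intro V _ _ _ hm X Y hX hY hne i j hi hj
    refine l3_core q hq 0 hm X Y hX hY hne i j hi hj ?_
    intro Z hZ hnle i' j' hi' hj'
    exfalso
    have hP : finrank F (X ⊔ Y : Submodule F V) = 2 := sup_points_rank2 X Y hX hY hne
    have htop : (X ⊔ Y : Submodule F V) = ⊤ := Submodule.eq_top_of_finrank_eq (hP.trans hm.symm)
    exact hnle (htop ▸ le_top)
  | succ m ih =>
    intro V _ _ _ hm X Y hX hY hne i j hi hj
    refine l3_core q hq (m + 1) hm X Y hX hY hne i j hi hj ?_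
    intro Z hZ hnle i' j' hieq hjeq
    have hzx : Z ≠ X := fun h => hnle (h ▸ le_sup_left)
    have hzy : Z ≠ Y := fun h => hnle (h ▸ le_sup_right)
    have hXbar : finrank F (X.map Z.mkQ) = 1 := by
      rw [finrank_map_mkQ_of_disjoint Z X (points_disjoint X Z hX hZ (fun h => hzx h.symm))]
      exact hX
    have hYbar : finrank F (Y.map Z.mkQ) = 1 := by
      rw [finrank_map_mkQ_of_disjoint Z Y (points_disjoint Y Z hY hZ (fun h => hzy h.symm))]
      exact hY
    have hbarne := far_maps_ne X Y Z hX hY hZ hne hnle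
    exact ih (V ⧸ Z) (finrank_quot Z hZ (m + 2) hm) (X.map Z.mkQ) (Y.map Z.mkQ)
      hXbar hYbar hbarne i' j' (by omega) (by omega)

lemma natgeom_cast (q : ℕ) (hq2 : 2 ≤ q) (t : ℕ) :
    ((natgeom q t : ℕ) : ℚ) = ((q : ℚ) ^ t - 1) / ((q : ℚ) - 1) := by
  have h := natgeom_mul q t (by omega)
  have hcast : ((natgeom q t : ℕ) : ℚ) * ((q : ℚ) - 1) + 1 = (q : ℚ) ^ t := by
    have := congrArg (fun x : ℕ => (x : ℚ)) h
    push_cast at this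
    have hq1 : ((q - 1 : ℕ) : ℚ) = (q : ℚ) - 1 := by
      rw [Nat.cast_sub (by omega)]
      norm_num
    push_cast [hq1] at this ⊢
    linarith [this]
  have hne : ((q : ℚ) - 1) ≠ 0 := by
    have : (2 : ℚ) ≤ (q : ℚ) := by exact_mod_cast hq2
    intro h0
    linarith
  field_simp
  linarith [hcast]

lemma cA_eq_phiN (q : ℕ) (hq2 : 2 ≤ q) : ∀ k : ℕ, cA (q : ℚ) k = ((phiN q (k + 1) : ℕ) : ℚ) := by
  intro k
  induction k with
  | zero =>
    simp [cA, phiN_succ, phiN_zero, natgeom_one]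
  | succ k ih =>
    rw [cA, Finset.prod_Icc_succ_top (by omega : 1 ≤ k + 1), ← cA, ih,
      phiN_succ q (k + 1), Nat.cast_mul, natgeom_cast q hq2 (k + 2)]
end Main

/-- `|C_i^X ∩ C_j^Y|` equals `δ_{ij}·c(n-1)·q^(i-1)` when `X = Y`, and satisfies
`q·|C_i^X ∩ C_j^Y| = c(n-2)·q^(i-1)·(q^(j-1)-δ_{ij})` when `X ≠ Y`. -/
theorem card_inter_type_sets (F : Type) [Field F] [Fintype F] (q : ℕ)
    (hq : Fintype.card F = q) (n : ℕ) (hn : 2 ≤ n)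
    (X Y : Submodule F (Fin (n + 1) → F))
    (hX : Module.finrank F X = 1) (hY : Module.finrank F Y = 1)
    (i j : ℕ) (hi1 : 1 ≤ i) (hi2 : i ≤ n + 1) (hj1 : 1 ≤ j) (hj2 : j ≤ n + 1) :
    (X = Y →
      (Nat.card {c : MaxFlagA F n // flagTypeA c X = i ∧ flagTypeA c Y = j} : ℚ) =
        (if i = j then 1 else 0) * cA (q : ℚ) (n - 1) * (q : ℚ) ^ (i - 1)) ∧
    (X ≠ Y →
      (q : ℚ) * (Nat.card {c : MaxFlagA F n // flagTypeA c X = i ∧ flagTypeA c Y = j} : ℚ) =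
        cA (q : ℚ) (n - 2) * (q : ℚ) ^ (i - 1) *
          ((q : ℚ) ^ (j - 1) - (if i = j then 1 else 0))) := by
  obtain ⟨n', rfl⟩ : ∃ n', n = n' + 2 := ⟨n - 2, by omega⟩
  have hq2 : 2 ≤ q := by rw [← hq]; exact Fintype.one_lt_card
  have hm : finrank F (Fin (n' + 2 + 1) → F) = n' + 2 + 1 := Module.finrank_fin_fun F
  obtain ⟨i'', rfl⟩ : ∃ t, i = t + 1 := ⟨i - 1, by omega⟩
  obtain ⟨j'', rfl⟩ : ∃ t, j = t + 1 := ⟨j - 1, by omega⟩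
  constructor
  · rintro rfl
    by_cases hij : i'' + 1 = j'' + 1
    · have hj'' : i'' = j'' := by omega
      subst hj''
      rw [if_pos rfl]
      have hcv : {c : MaxFlagA F (n' + 2) //
          flagTypeA c X = i'' + 1 ∧ flagTypeA c X = i'' + 1} =
        {c : GFlag F (Fin (n' + 2 + 1) → F) (n' + 2 + 1) //
          gtype c X = i'' + 1 ∧ gtype c X = i'' + 1} := rfl
      rw [hcv, Nat.card_congr (Equiv.subtypeEquivRight
        (fun c : GFlag F (Fin (n' + 2 + 1) → F) (n' + 2 + 1) =>
          and_self_iff (a := gtype c X = i'' + 1)))]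
      rw [flag_card_one q hq (n' + 2) (Fin (n' + 2 + 1) → F) hm X hX i'' (by omega)]
      rw [show n' + 2 - 1 = n' + 1 from rfl, show i'' + 1 - 1 = i'' from rfl,
        cA_eq_phiN q hq2 (n' + 1), show n' + 1 + 1 = n' + 2 from rfl]
      push_cast
      ring
    · rw [if_neg hij]
      haveI : IsEmpty {c : MaxFlagA F (n' + 2) //
          flagTypeA c X = i'' + 1 ∧ flagTypeA c X = j'' + 1} := by
        refine ⟨fun c => ?_⟩
        have h1 := c.2.1
        have h2 := c.2.2
        omega
      rw [Nat.card_of_isEmpty]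
      simp
  · intro hne
    have hcv : {c : MaxFlagA F (n' + 2) //
        flagTypeA c X = i'' + 1 ∧ flagTypeA c Y = j'' + 1} =
      {c : GFlag F (Fin (n' + 2 + 1) → F) (n' + 1 + 2) //
        gtype c X = i'' + 1 ∧ gtype c Y = j'' + 1} := rfl
    rw [hcv]
    have h2 := flag_card_two q hq (n' + 1) (Fin (n' + 2 + 1) → F) hm X Y hX hY hne
      i'' j'' (by omega) (by omega)
    rw [h2, show n' + 2 - 2 = n' from rfl, show i'' + 1 - 1 = i'' from rfl,
      show j'' + 1 - 1 = j'' from rfl, cA_eq_phiN q hq2 n']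
    have hdd : (if i'' + 1 = j'' + 1 then (1 : ℚ) else 0) =
        (if i'' = j'' then (1 : ℚ) else 0) := by
      by_cases hij : i'' = j''
      · rw [if_pos (by omega), if_pos hij]
      · rw [if_neg (by omega), if_neg hij]
    rw [hdd]
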